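/- Let D be a connected acyclic digraph and let H be a convex set of D. If u ∈ H, v ∉ H, the arc u→v exists, P is a directed path of maximum length whose initial vertex is in H, whose terminal vertex is v, and all of whose other vertices lie outside H, and w is the second vertex of P, then H ∪ {w} is convex in D; moreover if H is connected then H ∪ {w} is connected. -/

import Mathlib

/-!
Digraphs are given by an arc relation `A : V → V → Prop` on a vertex type `V`.
A directed path from `a` to `b` is encoded as `a :: (l ++ [b])` where the list
satisfies `List.Chain A` (consecutive arcs) and `List.Nodup` (distinct vertices);
`l` is the list of internal vertices.
-/

variable {V : Type*}

/-- A non-empty vertex set `X` is convex if no directed path between two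
vertices of `X` contains a vertex not in `X`. -/
def ConvexIn (A : V → V → Prop) (X : Set V) : Prop :=
  X.Nonempty ∧ ∀ a b : V, ∀ l : List V, a ∈ X → b ∈ X →
    List.Chain A a (l ++ [b]) → (a :: (l ++ [b])).Nodup → ∀ w ∈ l, w ∈ X

/-- A vertex set is connected if the underlying undirected graph induced on it
is connected. -/
def ConnectedIn (A : V → V → Prop) (X : Set V) : Prop :=
  ((SimpleGraph.fromRel A).induce X).Connected

/-- A digraph is acyclic if it has no directed cycle, equivalently no
nontrivial directed closed walk. -/
def AcyclicDigraph (A : V → V → Prop) : Prop :=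
  ∀ v, ¬ Relation.TransGen A v v

/-- A digraph is connected if its underlying undirected graph is connected. -/
def DigraphConnected (A : V → V → Prop) : Prop :=
  (SimpleGraph.fromRel A).Connected

/-- A source is a vertex with in-degree zero. -/
def IsSourceIn (A : V → V → Prop) (v : V) : Prop := ∀ u, ¬ A u v

/-- A sink is a vertex with out-degree zero. -/
def IsSinkIn (A : V → V → Prop) (v : V) : Prop := ∀ u, ¬ A v u

/-- A cut-vertex of a connected digraph: deleting it disconnects the
underlying undirected graph. -/
def IsCutVertexIn (A : V → V → Prop) (v : V) : Prop :=
  ¬ ((SimpleGraph.fromRel A).induce {u | u ≠ v}).Connected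

private lemma chain_transGen {A : V → V → Prop} :
    ∀ {l : List V} {a x : V}, List.Chain A a l → x ∈ l → Relation.TransGen A a x := by
  intro l
  induction l with
  | nil => intro a x h hx; simp at hx
  | cons c t ih =>
    intro a x h hx
    rcases List.chain_cons.1 h with ⟨hac, hct⟩
    rcases List.mem_cons.1 hx with rfl | hx
    · exact Relation.TransGen.single hac
    · exact Relation.TransGen.head hac (ih hct hx)

private lemma chain_transGen_last {A : V → V → Prop} {a x b : V} {l : List V}
    (h : List.Chain A a (l ++ [b])) (hx : x ∈ l) : Relation.TransGen A x b := by
  obtain ⟨s, t, rfl⟩ := List.append_of_mem hx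
  rw [List.append_assoc, List.cons_append] at h
  exact chain_transGen (List.isChain_cons_split.1 h).2 (by simp)

/-- Extension lemma: if `u ∈ H`, `v ∉ H`, `u → v` is an arc, and
`P = y :: w :: m` is a longest directed path with initial vertex `y ∈ H`,
terminal vertex `v`, and all other vertices outside `H`, then `H ∪ {w}` is
convex, and connected whenever `H` is connected. -/
theorem stmt_18 {V : Type*} [Fintype V] (A : V → V → Prop)
    (hconn : DigraphConnected A) (hacyc : AcyclicDigraph A)
    (H : Set V) (hHx : ConvexIn A H)
    (u v : V) (hu : u ∈ H) (hv : v ∉ H) (huv : A u v)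
    (y w : V) (m : List V)
    (hchain : List.Chain A y (w :: m))
    (hnodup : (y :: w :: m).Nodup)
    (hy : y ∈ H)
    (hterm : (w :: m).getLast? = some v)
    (hout : ∀ x ∈ w :: m, x ∉ H)
    (hmax : ∀ (y' : V) (m' : List V), y' ∈ H → List.Chain A y' m' →
      (y' :: m').Nodup → m'.getLast? = some v → (∀ x ∈ m', x ∉ H) →
      m'.length ≤ (w :: m).length) :
    ConvexIn A (H ∪ {w}) ∧ (ConnectedIn A H → ConnectedIn A (H ∪ {w})) := by
  obtain ⟨hyw, hwm⟩ := List.chain_cons.1 hchain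
  have hwH : w ∉ H := hout w (List.mem_cons_self)
  have hmnd : (w :: m).Nodup := hnodup.of_cons
  have key : ∀ (a : V) (l : List V), a ∈ H → List.Chain A a (l ++ [w]) →
      (a :: (l ++ [w])).Nodup → (∀ z ∈ l, z ∉ H) → l = [] := by
    intro a l ha hc hn hall
    by_cases hdisj : ∀ z ∈ l, z ∉ m
    · have hwnl : w ∉ l := by
        have := (List.nodup_append.1 hn.of_cons).2.2
        intro h; exact this w h w (by simp) rfl
      have hlen := hmax a (l ++ w :: m) ha
          (List.isChain_cons_split.2 ⟨hc, hwm⟩)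
          (by
            rw [List.nodup_cons]
            constructor
            · intro hmem
              rcases List.mem_append.1 hmem with h1 | h2
              · exact hall a h1 ha
              · exact hout a h2 ha
            · rw [List.nodup_append]
              refine ⟨(List.nodup_append.1 hn.of_cons).1, hmnd, ?_⟩
              intro z hzl b hzm hzb; subst hzb
              rcases List.mem_cons.1 hzm with rfl | hzm
              · exact hwnl hzl
              · exact hdisj z hzl hzm)
          (by simp [List.getLast?_append, hterm])
          (by
            intro x hx
            rcases List.mem_append.1 hx with h1 | h2
            · exact hall x h1
            · exact hout x h2)
      have : l.length = 0 := by
        simp only [List.length_append, List.length_cons] at hlen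
        omega
      exact List.length_eq_zero_iff.1 this
    · push_neg at hdisj
      obtain ⟨x, hxl, hxm⟩ := hdisj
      exact absurd ((chain_transGen hwm hxm).trans (chain_transGen_last hc hxl)) (hacyc w)
  have main : ∀ (n : ℕ) (l : List V) (a : V), l.length ≤ n → a ∈ H →
      List.Chain A a (l ++ [w]) → (a :: (l ++ [w])).Nodup → ∀ x ∈ l, x ∈ H := by
    intro n
    induction n with
    | zero =>
      intro l a hl _ _ _ x hx
      rw [Nat.le_zero, List.length_eq_zero_iff] at hl
      subst hl; simp at hx
    | succ n ih =>
      intro l a hl ha hc hn x hx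
      by_cases hall : ∀ z ∈ l, z ∉ H
      · rw [key a l ha hc hn hall] at hx; simp at hx
      · push_neg at hall
        obtain ⟨z, hzl, hzH⟩ := hall
        obtain ⟨s, t, rfl⟩ := List.append_of_mem hzl
        rw [List.append_assoc, List.cons_append] at hc hn
        obtain ⟨hc1, hc2⟩ := List.isChain_cons_split.1 hc
        have hn1 : (a :: (s ++ [z])).Nodup := by
          refine List.Nodup.sublist ?_ hn
          refine List.cons_sublist_cons.2 ?_
          have h := List.sublist_append_left (s ++ [z]) (t ++ [w])
          simpa using h
        have hn2 : (z :: (t ++ [w])).Nodup := by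
          refine List.Nodup.sublist ?_ hn
          exact (List.sublist_append_right s _).trans (List.sublist_cons_self _ _)
        rcases List.mem_append.1 hx with hx1 | hx2
        · exact hHx.2 a z s ha hzH hc1 hn1 x hx1
        · rcases List.mem_cons.1 hx2 with rfl | hx2
          · exact hzH
          · have hlen : t.length ≤ n := by
              simp only [List.length_append, List.length_cons] at hl
              omega
            exact ih t z hlen hzH hc2 hn2 x hx2
  constructor
  · refine ⟨⟨y, Or.inl hy⟩, ?_⟩
    intro a b l ha hb hc hn x hx
    rcases ha with ha | ha
    · rcases hb with hb | hb
      · exact Or.inl (hHx.2 a b l ha hb hc hn x hx)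
      · have hb' : b = w := hb
        subst hb'
        exact Or.inl (main l.length l a le_rfl ha hc hn x hx)
    · have ha' : a = w := ha
      rw [ha'] at hc hn
      exfalso
      have hynotin : y ∉ l ++ [b] := by
        intro hmem
        exact hacyc w ((chain_transGen hc hmem).tail hyw)
      rcases hb with hb | hb
      · have hchain2 : List.Chain A y ((w :: l) ++ [b]) := by
          rw [List.cons_append]; exact List.isChain_cons_cons.2 ⟨hyw, hc⟩
        have hnd2 : (y :: ((w :: l) ++ [b])).Nodup := by
          rw [List.nodup_cons]
          refine ⟨?_, by simpa using hn⟩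
          rw [List.cons_append, List.mem_cons]
          rintro (rfl | hmem)
          · exact hwH hy
          · exact hynotin hmem
        exact hwH (hHx.2 y b (w :: l) hy hb hchain2 hnd2 w (List.mem_cons_self))
      · have hb' : b = w := hb
        subst hb'
        exact (List.nodup_cons.1 hn).1 (by simp)
  · intro hHc
    have hywne : y ≠ w := fun h => hwH (h ▸ hy)
    have hadj : ((SimpleGraph.fromRel A).induce (H ∪ {w})).Adj
        ⟨y, Or.inl hy⟩ ⟨w, Or.inr rfl⟩ := by
      simp only [SimpleGraph.comap_adj, SimpleGraph.fromRel_adj]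
      exact ⟨hywne, Or.inl hyw⟩
    let f : (SimpleGraph.fromRel A).induce H →g (SimpleGraph.fromRel A).induce (H ∪ {w}) :=
      ⟨fun p => ⟨p.1, Or.inl p.2⟩, fun hab => hab⟩
    have hreach : ∀ z : ↥(H ∪ {w}),
        ((SimpleGraph.fromRel A).induce (H ∪ {w})).Reachable z ⟨y, Or.inl hy⟩ := by
      rintro ⟨z, hz | hz⟩
      · exact SimpleGraph.Reachable.map f (hHc.preconnected ⟨z, hz⟩ ⟨y, hy⟩)
      · have hz' : z = w := hz
        subst hz'
        exact hadj.symm.reachable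
    haveI : Nonempty ↥(H ∪ {w}) := ⟨⟨y, Or.inl hy⟩⟩
    exact ⟨fun x z => (hreach x).trans (hreach z).symm⟩
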